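/- Let A ∈ sl(n,ℍ) and let B = diag(a₁+i b₁, …, aₙ+i bₙ) ∈ sl(n,ℍ) be diagonal with aᵣ, bᵣ ∈ ℝ and a₁ > a₂ ≥ ⋯ ≥ a_{n−1} > aₙ. Let q ∈ ℍ be the (n,1) entry of A and let Y = q·E_{n1} be the matrix whose (n,1) entry is q and all other entries are 0. Then there exists a sequence t_k → −∞ of real numbers such that e^{t_k(a₁−aₙ)} · exp(t_k B) · A · exp(−t_k B) converges to Y in the space of n×n quaternionic matrices. -/

import Mathlib

open Quaternion Matrix

noncomputable section

/-- `n×n` quaternionic matrices. -/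
abbrev Mq (n : ℕ) := Matrix (Fin n) (Fin n) ℍ[ℝ]

/-- `sl(n, ℍ)`: matrices whose trace has zero real part. -/
def slSet (n : ℕ) : Set (Mq n) := {X | (Matrix.trace X).re = 0}

/-- matrix exponential of quaternionic matrices -/
noncomputable def mexp {n : ℕ} (X : Mq n) : Mq n := NormedSpace.exp X

open Filter

namespace Stmt12Aux

open NormedSpace Bornology

noncomputable instance : NormedAlgebra ℚ ℍ[ℝ] := NormedAlgebra.restrictScalars ℚ ℝ ℍ[ℝ]

/-- the quaternion `i`. -/
noncomputable def qi : ℍ[ℝ] := ⟨0, 1, 0, 0⟩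

/-- the one-parameter group `x ↦ exp (x i)`. -/
noncomputable def fq (x : ℝ) : ℍ[ℝ] := NormedSpace.exp (x • qi)

theorem fq_add (x y : ℝ) : fq (x + y) = fq x * fq y := by
  rw [fq, fq, fq, add_smul]
  exact NormedSpace.exp_add_of_commute (((Commute.refl qi).smul_left x).smul_right y)

theorem fq_zero : fq 0 = 1 := by simp [fq]

theorem star_fq (x : ℝ) : star (fq x) = fq (-x) := by
  rw [fq, fq, star_exp]
  congr 1
  ext <;> simp [Quaternion.re_smul, Quaternion.imI_smul, Quaternion.imJ_smul, Quaternion.imK_smul] <;> simp [qi]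

theorem norm_fq (x : ℝ) : ‖fq x‖ = 1 := by
  rw [fq, Quaternion.norm_exp]
  simp [Quaternion.re_smul]; simp [qi]

theorem fq_mul_star (x : ℝ) : fq x * star (fq x) = 1 := by
  rw [star_fq, ← fq_add, add_neg_cancel, fq_zero]

theorem exp_entry (t a b : ℝ) (x : ℍ[ℝ]) (hx : x = ⟨a, b, 0, 0⟩) :
    exp (t • x) = Real.exp (t * a) • fq (t * b) := by
  have h : t • x = ((t * a : ℝ) : ℍ[ℝ]) + (t * b) • qi := by
    ext <;> simp only [Quaternion.re_smul, Quaternion.imI_smul, Quaternion.imJ_smul, Quaternion.imK_smul, re_add, imI_add, imJ_add, imK_add] <;> subst hx <;> simp [qi]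
  have hc : Commute (((t * a : ℝ)) : ℍ[ℝ]) ((t * b) • qi) := Quaternion.coe_commutes _ _
  rw [h, NormedSpace.exp_add_of_commute hc, Quaternion.exp_coe, fq, coe_mul_eq_smul, Real.exp_eq_exp_ℝ]

/-- auxiliary diagonal vector -/
noncomputable def dvec {n : ℕ} (a b : Fin n → ℝ) : Fin n → ℍ[ℝ] := fun r => ⟨a r, b r, 0, 0⟩

theorem entry_formula {n : ℕ} (A B : Mq n) (a b : Fin n → ℝ)
    (hBdiag : B = Matrix.diagonal fun r => (⟨a r, b r, 0, 0⟩ : ℍ[ℝ])) (t : ℝ) (r s : Fin n) :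
    (mexp (t • B) * A * mexp (-(t • B))) r s
      = Real.exp (t * (a r - a s)) • (fq (t * b r) * A r s * fq (-t * b s)) := by
  have hd : ∀ (u : ℝ),
      mexp (u • B) = Matrix.diagonal fun r => Real.exp (u * a r) • fq (u * b r) := by
    intro u
    have h1 : u • B = Matrix.diagonal (u • dvec a b) := by
      rw [hBdiag, Matrix.diagonal_smul]; rfl
    rw [h1, mexp, Matrix.exp_diagonal]
    have h2 : exp (u • dvec a b) = fun r => Real.exp (u * a r) • fq (u * b r) := by
      funext r
      rw [Pi.coe_exp]
      exact exp_entry u (a r) (b r) (dvec a b r) rfl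
    rw [h2]
  have hneg : -(t • B) = (-t) • B := by rw [neg_smul]
  rw [hneg, hd, hd, Matrix.mul_diagonal, Matrix.diagonal_mul, smul_mul_assoc, smul_mul_assoc,
    mul_smul_comm, smul_smul, ← Real.exp_add]
  ring_nf

theorem gap_lemma {φ : ℕ → ℕ} (hφ : StrictMono φ) (m l : ℕ) : φ m + l ≤ φ (m + l) := by
  induction l with
  | zero => simp
  | succ l ih =>
      have h := hφ (show m + l < m + l + 1 by omega)
      have h2 : m + (l + 1) = m + l + 1 := by omega
      rw [h2]
      omega

theorem exists_seq (c₁ c₂ : ℝ) : ∃ t : ℕ → ℝ, Tendsto t atTop atBot ∧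
    Tendsto (fun k => fq (t k * c₁)) atTop (nhds 1) ∧
    Tendsto (fun k => fq (t k * c₂)) atTop (nhds 1) := by
  set w : ℕ → ℍ[ℝ] × ℍ[ℝ] := fun k => (fq (-(k : ℝ) * c₁), fq (-(k : ℝ) * c₂)) with hw
  have hb : ∀ k, w k ∈ Metric.closedBall (0 : ℍ[ℝ] × ℍ[ℝ]) 1 := by
    intro k
    rw [Metric.mem_closedBall, dist_zero_right, Prod.norm_def]
    simp [hw, norm_fq]
  obtain ⟨L, _, φ, hφ, hconv⟩ := tendsto_subseq_of_bounded Metric.isBounded_closedBall hb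
  have h2k : Tendsto (fun k : ℕ => 2 * k + 1) atTop atTop :=
    tendsto_atTop_mono (f := fun k : ℕ => k) (fun k => by show k ≤ 2 * k + 1; omega) tendsto_id
  set t : ℕ → ℝ := fun k => (φ k : ℝ) - (φ (2 * k + 1) : ℝ) with ht
  have hbot : Tendsto t atTop atBot := by
    apply tendsto_atBot_mono (f := fun k : ℕ => -((k : ℝ) + 1))
    · intro k
      have h := gap_lemma hφ k (k + 1)
      have h2 : φ (k + (k + 1)) = φ (2 * k + 1) := by congr 1; omega
      rw [h2] at h
      have : (φ k : ℝ) + ((k : ℝ) + 1) ≤ (φ (2 * k + 1) : ℝ) := by exact_mod_cast h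
      simp only [ht]; linarith
    · exact tendsto_neg_atBot_iff.2 (tendsto_atTop_add_const_right _ 1 tendsto_natCast_atTop_atTop)
  have key : ∀ (c : ℝ) (get : ℍ[ℝ] × ℍ[ℝ] → ℍ[ℝ]), Continuous get →
      (∀ k, get (w k) = fq (-(k : ℝ) * c)) →
      Tendsto (fun k => fq (t k * c)) atTop (nhds 1) := by
    intro c get hget hval
    have hfact : ∀ k, fq (t k * c)
        = fq (-(φ (2 * k + 1) : ℝ) * c) * star (fq (-(φ k : ℝ) * c)) := by
      intro k
      have h1 : t k * c = (-(φ (2 * k + 1) : ℝ) * c) + (φ k : ℝ) * c := by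
        simp only [ht]; ring
      rw [h1, fq_add]
      congr 1
      rw [star_fq]
      congr 1
      ring
    have hA : Tendsto (fun k => fq (-(φ (2 * k + 1) : ℝ) * c)) atTop (nhds (get L)) := by
      have : Tendsto (fun k => get (w (φ (2 * k + 1)))) atTop (nhds (get L)) :=
        ((hget.tendsto L).comp hconv).comp h2k
      simpa only [hval] using this
    have hB : Tendsto (fun k => star (fq (-(φ k : ℝ) * c))) atTop (nhds (star (get L))) := by
      have : Tendsto (fun k => get (w (φ k))) atTop (nhds (get L)) :=
        (hget.tendsto L).comp hconv
      simpa only [hval] using this.star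
    have hmul : Tendsto (fun k => fq (t k * c)) atTop (nhds (get L * star (get L))) := by
      simp only [hfact]
      exact hA.mul hB
    have hone : get L * star (get L) = 1 := by
      have t1 : Tendsto (fun k => get (w (φ k)) * star (get (w (φ k)))) atTop
          (nhds (get L * star (get L))) :=
        ((hget.tendsto L).comp hconv).mul ((hget.tendsto L).comp hconv).star
      have t2 : (fun k => get (w (φ k)) * star (get (w (φ k)))) = fun _ => (1 : ℍ[ℝ]) := by
        funext k; rw [hval, fq_mul_star]
      rw [t2] at t1
      exact (tendsto_nhds_unique tendsto_const_nhds t1).symm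
    rwa [hone] at hmul
  exact ⟨t, hbot, key c₁ Prod.fst continuous_fst (fun k => rfl),
    key c₂ Prod.snd continuous_snd (fun k => rfl)⟩

end Stmt12Aux

open Stmt12Aux

/-- convergence of matrices follows from entrywise convergence -/
theorem tendsto_matrix_of_entries {m : Type} [Fintype m] (F : ℕ → Matrix m m ℍ[ℝ])
    (Y : Matrix m m ℍ[ℝ]) (h : ∀ r s, Tendsto (fun k => F k r s) atTop (nhds (Y r s))) :
    Tendsto F atTop (nhds Y) := by
  rw [show (nhds Y) = nhds (fun r => Y r) from rfl]
  exact tendsto_pi_nhds.2 fun r => tendsto_pi_nhds.2 fun s => h r s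

/-- if `B = diag (a₁ + i b₁, …, aₙ + i bₙ)` with `a₁ > a₂ ≥ ⋯ ≥ a_{n-1} > aₙ`,
then along a suitable sequence `t_k → -∞` the matrices
`e^{t_k (a₁ - aₙ)} exp(t_k B) A exp(-t_k B)` converge to `Y = q E_{n1}`, where `q` is the
`(n,1)` entry of `A`. -/
theorem stmt12 (n : ℕ) (hn : 2 ≤ n) (A B : Mq n)
    (hA : A ∈ slSet n) (hB : B ∈ slSet n)
    (a b : Fin n → ℝ)
    (hBdiag : B = Matrix.diagonal fun r => (⟨a r, b r, 0, 0⟩ : ℍ[ℝ]))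
    (ha1 : a ⟨0, by omega⟩ > a ⟨1, by omega⟩)
    (hamono : ∀ r s : Fin n, r ≤ s → a s ≤ a r)
    (han : a ⟨n - 2, by omega⟩ > a ⟨n - 1, by omega⟩) :
    ∃ t : ℕ → ℝ, Tendsto t atTop atBot ∧
      Tendsto
        (fun k => Real.exp ((t k) * (a ⟨0, by omega⟩ - a ⟨n - 1, by omega⟩)) •
          (mexp ((t k) • B) * A * mexp (-((t k) • B))))
        atTop
        (nhds (Matrix.single ⟨n - 1, by omega⟩ ⟨0, by omega⟩
          (A ⟨n - 1, by omega⟩ ⟨0, by omega⟩))) := by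
  have h0 : 0 < n := by omega
  have hN : n - 1 < n := by omega
  set i0 : Fin n := ⟨0, h0⟩ with hi0
  set iN : Fin n := ⟨n - 1, hN⟩ with hiN
  obtain ⟨t, ht, h1, h2⟩ := Stmt12Aux.exists_seq (b iN) (b i0)
  refine ⟨t, ht, ?_⟩
  apply tendsto_matrix_of_entries
  intro r s
  have hentry : ∀ k, (Real.exp ((t k) * (a i0 - a iN)) •
      (mexp ((t k) • B) * A * mexp (-((t k) • B)))) r s
      = Real.exp ((t k) * (a i0 - a iN + a r - a s)) •
        (fq (t k * b r) * A r s * fq (-(t k) * b s)) := by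
    intro k
    rw [Matrix.smul_apply, Stmt12Aux.entry_formula A B a b hBdiag, smul_smul, ← Real.exp_add,
      show (t k) * (a i0 - a iN) + t k * (a r - a s)
        = t k * (a i0 - a iN + a r - a s) by ring]
  simp only [hentry]
  by_cases hrs : r = iN ∧ s = i0
  · obtain ⟨hr, hs⟩ := hrs
    subst hr; subst hs
    rw [Matrix.single_apply_same]
    have hz : ∀ k, Real.exp (t k * (a i0 - a iN + a iN - a i0)) = 1 := fun k => by
      rw [show a i0 - a iN + a iN - a i0 = 0 by ring, mul_zero, Real.exp_zero]
    simp only [hz, one_smul]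
    have hstar : ∀ k, fq (-(t k) * b i0) = star (fq (t k * b i0)) := fun k => by
      rw [star_fq, neg_mul]
    simp only [neg_mul] at hstar ⊢
    simp only [hstar]
    have hlim := (h1.mul (tendsto_const_nhds (x := A iN i0))).mul h2.star
    simpa using hlim
  · rw [Matrix.single_apply_of_ne iN i0 (A iN i0) r s
      (show ¬(iN = r ∧ i0 = s) from fun h => hrs ⟨h.1.symm, h.2.symm⟩)]
    set D : ℝ := a i0 - a iN + a r - a s with hD
    have hri : a iN ≤ a r := by
      apply hamono r iN
      rw [Fin.le_def]
      show r.val ≤ n - 1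
      have := r.isLt
      omega
    have h0s : a s ≤ a i0 := by
      apply hamono i0 s
      rw [Fin.le_def]
      show 0 ≤ s.val
      omega
    have hDpos : 0 < D := by
      rcases not_and_or.mp hrs with hr | hs
      · have hrv : r.val ≠ n - 1 := fun h => hr (Fin.ext h)
        have hr2 : a ⟨n - 2, by omega⟩ ≤ a r := by
          apply hamono r ⟨n - 2, by omega⟩
          rw [Fin.le_def]
          show r.val ≤ n - 2
          have := r.isLt
          omega
        have : a iN < a r := lt_of_lt_of_le han hr2
        rw [hD]; linarith
      · have hsv : s.val ≠ 0 := fun h => hs (Fin.ext h)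
        have hs2 : a s ≤ a ⟨1, by omega⟩ := by
          apply hamono ⟨1, by omega⟩ s
          rw [Fin.le_def]
          show 1 ≤ s.val
          omega
        have : a s < a i0 := lt_of_le_of_lt hs2 ha1
        rw [hD]; linarith
    have hexp : Tendsto (fun k => Real.exp (t k * D)) atTop (nhds 0) :=
      Real.tendsto_exp_atBot.comp (ht.atBot_mul_const hDpos)
    rw [tendsto_zero_iff_norm_tendsto_zero]
    have hnorm : ∀ k, ‖Real.exp (t k * D) • (fq (t k * b r) * A r s * fq (-(t k) * b s))‖
        = Real.exp (t k * D) * ‖A r s‖ := fun k => by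
      rw [norm_smul, Real.norm_eq_abs, abs_of_pos (Real.exp_pos _), norm_mul, norm_mul,
        norm_fq, norm_fq, one_mul, mul_one]
    apply squeeze_zero (fun k => norm_nonneg _) (fun k => le_of_eq (hnorm k))
    simpa using hexp.mul_const ‖A r s‖
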